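/- Let (μ_α) be a sequence of positive reals with Σ_α μ_α < ∞, and let C_α be the Toeplitz matrices (with C_α quadratic form bounded by 8^α on the unit polydisc, all entries of modulus 1). Then the quadratic form C(x) = Σ_{α=1}^∞ (μ_α / 8^α) C_α applied to consecutive blocks of variables of lengths 4, 4², 4³, … is completely bounded on the closed unit polydisc 𝒮: all its rectangular partial sums are bounded in modulus by a constant (e.g. by 2 Σ_α μ_α). -/

import Mathlib

open Filter Topology

/-- Toeplitz's matrices: `toepT 1` is the `4 × 4` matrix with `-1` on the diagonal and `1`
off it, and `toepT (α+1)` is the `4 × 4` block matrix with blocks `-toepT α` on the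
diagonal and `toepT α` off it; the index set of `toepT α` is `Fin α → Fin 4`. -/
def toepT : (α : ℕ) → Matrix (Fin α → Fin 4) (Fin α → Fin 4) ℝ
  | 0 => 1
  | (α + 1) => fun i j =>
      (if i 0 = j 0 then (-1 : ℝ) else 1) *
        toepT α (fun k => i k.succ) (fun k => j k.succ)

lemma fin4_sum (a b : Fin 4) :
    ∑ c : Fin 4, (if a = c then (-1:ℝ) else 1) * (if b = c then (-1:ℝ) else 1) =
      if a = b then 4 else 0 := by
  fin_cases a <;> fin_cases b <;> simp [Fin.sum_univ_four] <;> norm_num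

lemma toepT_orth (α : ℕ) (i j : Fin α → Fin 4) :
    ∑ k, toepT α i k * toepT α j k = if i = j then (4:ℝ)^α else 0 := by
  induction α with
  | zero =>
    obtain rfl : i = j := Subsingleton.elim _ _
    rw [if_pos rfl, Fintype.sum_subsingleton _ i]
    simp [toepT]
  | succ α ih =>
    rw [← (Fin.consEquiv (fun _ => Fin 4)).sum_comp, Fintype.sum_prod_type]
    have key : ∀ (a : Fin 4) (k' : Fin α → Fin 4),
        toepT (α+1) i (Fin.consEquiv (fun _ => Fin 4) (a, k')) *
          toepT (α+1) j (Fin.consEquiv (fun _ => Fin 4) (a, k')) =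
        ((if i 0 = a then (-1:ℝ) else 1) * (if j 0 = a then (-1:ℝ) else 1)) *
          (toepT α (fun t => i t.succ) k' * toepT α (fun t => j t.succ) k') := by
      intro a k'
      show toepT (α+1) i (Fin.cons a k') * toepT (α+1) j (Fin.cons a k') = _
      simp only [toepT, Fin.cons_zero, Fin.cons_succ]
      ring
    simp only [key, ← Finset.mul_sum, ← Finset.sum_mul]
    rw [ih]
    have h4 := fin4_sum (i 0) (j 0)
    rw [Finset.sum_congr rfl (fun a _ => rfl), h4]
    have hiff : i = j ↔ (i 0 = j 0 ∧ (fun t : Fin α => i t.succ) = (fun t => j t.succ)) := by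
      constructor
      · rintro rfl; exact ⟨rfl, rfl⟩
      · rintro ⟨h0, hs⟩
        funext t
        refine Fin.cases h0 (fun t => ?_) t
        exact congrFun hs t
    by_cases h0 : i 0 = j 0 <;> by_cases hs : (fun t : Fin α => i t.succ) = (fun t => j t.succ) <;>
      simp [h0, hs, hiff, pow_succ] <;> ring

lemma toep_l2 (α : ℕ) (x : (Fin α → Fin 4) → ℂ) :
    ∑ j, Complex.normSq (∑ i, (toepT α i j : ℂ) * x i) =
      4^α * ∑ i, Complex.normSq (x i) := by
  have : ((∑ j, Complex.normSq (∑ i, (toepT α i j : ℂ) * x i) : ℝ) : ℂ)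
      = ((4^α * ∑ i, Complex.normSq (x i) : ℝ) : ℂ) := by
    push_cast
    simp only [← Complex.mul_conj]
    calc ∑ j, (∑ i, (toepT α i j : ℂ) * x i) * (starRingEnd ℂ) (∑ i, (toepT α i j : ℂ) * x i)
        = ∑ j, ∑ i, ∑ k, ((toepT α i j : ℂ) * (toepT α k j : ℂ)) *
            (x i * (starRingEnd ℂ) (x k)) := by
          refine Finset.sum_congr rfl fun j _ => ?_
          rw [map_sum, Finset.sum_mul_sum]
          refine Finset.sum_congr rfl fun i _ => Finset.sum_congr rfl fun k _ => ?_
          simp [map_mul, Complex.conj_ofReal]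
          ring
      _ = ∑ i, ∑ k, (if i = k then ((4:ℝ)^α : ℂ) else 0) * (x i * (starRingEnd ℂ) (x k)) := by
          rw [Finset.sum_comm]
          refine Finset.sum_congr rfl fun i _ => ?_
          rw [Finset.sum_comm]
          refine Finset.sum_congr rfl fun k _ => ?_
          rw [← Finset.sum_mul]
          congr 1
          have horth := toepT_orth α i k
          calc ∑ t, (toepT α i t : ℂ) * (toepT α k t : ℂ)
              = ((∑ t, toepT α i t * toepT α k t : ℝ) : ℂ) := by push_cast; rfl
            _ = if i = k then ((4:ℝ)^α : ℂ) else 0 := by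
                rw [horth]; split <;> push_cast <;> rfl
      _ = 4^α * ∑ i, x i * (starRingEnd ℂ) (x i) := by
          rw [Finset.mul_sum]
          refine Finset.sum_congr rfl fun i _ => ?_
          rw [Finset.sum_eq_single i]
          · simp
          · intro k _ hk
            rw [if_neg (fun h => hk h.symm), zero_mul]
          · intro h; exact absurd (Finset.mem_univ i) h
  exact_mod_cast this

lemma toep_bilinear (α : ℕ) (x y : (Fin α → Fin 4) → ℂ)
    (hx : ∀ i, ‖x i‖ ≤ 1) (hy : ∀ i, ‖y i‖ ≤ 1) :
    ‖∑ i, ∑ j, (toepT α i j : ℂ) * x i * y j‖ ≤ 8^α := by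
  have hcard : (Fintype.card (Fin α → Fin 4) : ℝ) = 4^α := by
    simp [Fintype.card_fun]
  set u : (Fin α → Fin 4) → ℂ := fun j => ∑ i, (toepT α i j : ℂ) * x i with hu
  have h1 : ∑ i, ∑ j, (toepT α i j : ℂ) * x i * y j = ∑ j, u j * y j := by
    rw [Finset.sum_comm]
    refine Finset.sum_congr rfl fun j _ => ?_
    rw [hu, Finset.sum_mul]
  rw [h1]
  have h2 : ‖∑ j, u j * y j‖ ≤ ∑ j, ‖u j‖ :=
    (norm_sum_le _ _).trans (Finset.sum_le_sum fun j _ => by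
      rw [norm_mul]
      exact mul_le_of_le_one_right (norm_nonneg _) (hy j))
  have h3 : (∑ j, ‖u j‖)^2 ≤ (4:ℝ)^α * ∑ j, ‖u j‖^2 := by
    have := sq_sum_le_card_mul_sum_sq (s := Finset.univ) (f := fun j => ‖u j‖)
    simpa [hcard] using this
  have h4 : ∑ j, ‖u j‖^2 = 4^α * ∑ i, ‖x i‖^2 := by
    simpa [Complex.sq_norm, ← Complex.normSq_eq_norm_sq] using toep_l2 α x
  have h5 : ∑ i, ‖x i‖^2 ≤ (4:ℝ)^α := by
    calc ∑ i, ‖x i‖^2 ≤ ∑ _i : Fin α → Fin 4, (1:ℝ) :=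
          Finset.sum_le_sum fun i _ => by
            have := hx i
            nlinarith [norm_nonneg (x i)]
      _ = 4^α := by simp [hcard]
  have h6 : (∑ j, ‖u j‖)^2 ≤ ((8:ℝ)^α)^2 := by
    have : ((8:ℝ)^α)^2 = 4^α * (4^α * 4^α) := by
      rw [← pow_mul, mul_comm α 2, pow_mul, ← mul_pow, ← mul_pow]
      norm_num
    rw [this]
    refine h3.trans ?_
    rw [h4]
    have h40 : (0:ℝ) ≤ 4^α := by positivity
    nlinarith
  have h7 : (0:ℝ) ≤ ∑ j, ‖u j‖ := Finset.sum_nonneg fun j _ => norm_nonneg _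
  have h8 : ∑ j, ‖u j‖ ≤ 8^α := by
    nlinarith [pow_pos (show (0:ℝ) < 8 by norm_num) α]
  exact h2.trans h8

/-- `blockStart α` is the index in `ℕ` where the `α`-th block (of length `4^{α+1}`,
`α = 0, 1, 2, …`, corresponding to the paper's blocks of lengths `4, 4², 4³, …`) starts. -/
def blockStart (α : ℕ) : ℕ := ∑ β ∈ Finset.range α, 4 ^ (β + 1)

attribute [local instance] Classical.propDecidable

/-- The coefficients of Toeplitz's quadratic form `C(x) = ∑_α (μ_α / 8^{α+1}) C_{α+1}`,
applied to consecutive blocks of variables of lengths `4, 4², 4³, …`: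
`a_{mn} = (μ_α / 8^{α+1}) (C_{α+1})_{rs}` when `m, n` both lie in the `α`-th block (with
relative positions `r, s`), and `a_{mn} = 0` otherwise. -/
noncomputable def toepCoef (μ : ℕ → ℝ) (m n : ℕ) : ℝ :=
  if h : ∃ α, (blockStart α ≤ m ∧ m < blockStart (α + 1)) ∧
      (blockStart α ≤ n ∧ n < blockStart (α + 1)) then
    (μ h.choose / 8 ^ (h.choose + 1)) *
      toepT (h.choose + 1)
        (finFunctionFinEquiv.symm ⟨m - blockStart h.choose, by
          obtain ⟨⟨h1, h2⟩, h3, h4⟩ := h.choose_spec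
          have e : blockStart (h.choose + 1) = blockStart h.choose + 4 ^ (h.choose + 1) :=
            Finset.sum_range_succ _ _
          omega⟩)
        (finFunctionFinEquiv.symm ⟨n - blockStart h.choose, by
          obtain ⟨⟨h1, h2⟩, h3, h4⟩ := h.choose_spec
          have e : blockStart (h.choose + 1) = blockStart h.choose + 4 ^ (h.choose + 1) :=
            Finset.sum_range_succ _ _
          omega⟩)
  else 0

lemma blockStart_succ (α : ℕ) : blockStart (α + 1) = blockStart α + 4 ^ (α + 1) :=
  Finset.sum_range_succ _ _

lemma blockStart_mono : Monotone blockStart := by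
  intro a b hab
  exact Finset.sum_le_sum_of_subset (Finset.range_subset_range.2 hab)

lemma le_blockStart (n : ℕ) : n ≤ blockStart n := by
  induction n with
  | zero => simp [blockStart]
  | succ n ih =>
    rw [blockStart_succ]
    have : 1 ≤ 4 ^ (n + 1) := Nat.one_le_pow _ _ (by norm_num)
    omega

lemma block_unique {α β m : ℕ} (h1 : blockStart α ≤ m) (h2 : m < blockStart (α + 1))
    (h3 : blockStart β ≤ m) (h4 : m < blockStart (β + 1)) : α = β := by
  by_contra h
  rcases Nat.lt_or_ge α β with hlt | hge
  · have := blockStart_mono (show α + 1 ≤ β by omega)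
    omega
  · have hlt : β < α := lt_of_le_of_ne hge (Ne.symm h)
    have := blockStart_mono (show β + 1 ≤ α by omega)
    omega

lemma toepCoef_eq (μ : ℕ → ℝ) {α m n : ℕ}
    (hm1 : blockStart α ≤ m) (hm2 : m < blockStart (α + 1))
    (hn1 : blockStart α ≤ n) (hn2 : n < blockStart (α + 1)) :
    toepCoef μ m n = (μ α / 8 ^ (α + 1)) *
      toepT (α + 1)
        (finFunctionFinEquiv.symm ⟨m - blockStart α, by
          have := blockStart_succ α; omega⟩)
        (finFunctionFinEquiv.symm ⟨n - blockStart α, by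
          have := blockStart_succ α; omega⟩) := by
  have h : ∃ α, (blockStart α ≤ m ∧ m < blockStart (α + 1)) ∧
      (blockStart α ≤ n ∧ n < blockStart (α + 1)) := ⟨α, ⟨hm1, hm2⟩, hn1, hn2⟩
  have hc : h.choose = α :=
    block_unique h.choose_spec.1.1 h.choose_spec.1.2 hm1 hm2
  rw [toepCoef, dif_pos h]
  subst hc
  rfl

lemma toepCoef_eq_zero (μ : ℕ → ℝ) {α β m n : ℕ} (hab : α ≠ β)
    (hm1 : blockStart α ≤ m) (hm2 : m < blockStart (α + 1))
    (hn1 : blockStart β ≤ n) (hn2 : n < blockStart (β + 1)) :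
    toepCoef μ m n = 0 := by
  rw [toepCoef, dif_neg]
  rintro ⟨γ, ⟨hg1, hg2⟩, hg3, hg4⟩
  exact hab ((block_unique hm1 hm2 hg1 hg2).trans (block_unique hg3 hg4 hn1 hn2))

lemma sum_range_blockStart (L : ℕ) (g : ℕ → ℂ) :
    ∑ m ∈ Finset.range (blockStart L), g m
      = ∑ α ∈ Finset.range L, ∑ m ∈ Finset.Ico (blockStart α) (blockStart (α + 1)), g m := by
  induction L with
  | zero => simp [blockStart]
  | succ L ih =>
    rw [Finset.sum_range_succ, ← ih, Finset.range_eq_Ico, Finset.range_eq_Ico]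
    exact (Finset.sum_Ico_consecutive g (Nat.zero_le (blockStart L))
      (blockStart_mono (Nat.le_succ L))).symm

lemma block_sum (μ : ℕ → ℝ) (α : ℕ) (z w : ℕ → ℂ) :
    ∑ m ∈ Finset.Ico (blockStart α) (blockStart (α + 1)),
      ∑ n ∈ Finset.Ico (blockStart α) (blockStart (α + 1)),
        (toepCoef μ m n : ℂ) * z m * w n
    = ((μ α / 8 ^ (α + 1) : ℝ) : ℂ) *
        ∑ i, ∑ j, (toepT (α + 1) i j : ℂ) *
          z (blockStart α + (finFunctionFinEquiv i : ℕ)) *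
          w (blockStart α + (finFunctionFinEquiv j : ℕ)) := by
  have hb := blockStart_succ α
  have key : ∀ i j : Fin (α + 1) → Fin 4,
      (toepCoef μ (blockStart α + (finFunctionFinEquiv i : ℕ))
        (blockStart α + (finFunctionFinEquiv j : ℕ)) : ℝ)
      = (μ α / 8 ^ (α + 1)) * toepT (α + 1) i j := by
    intro i j
    have hi : ((finFunctionFinEquiv i : ℕ)) < 4 ^ (α + 1) := (finFunctionFinEquiv i).2
    have hj : ((finFunctionFinEquiv j : ℕ)) < 4 ^ (α + 1) := (finFunctionFinEquiv j).2
    rw [toepCoef_eq μ (α := α) (Nat.le_add_right _ _) (by omega) (Nat.le_add_right _ _)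
      (by omega)]
    congr 2
    · have : (⟨blockStart α + (finFunctionFinEquiv i : ℕ) - blockStart α, by omega⟩ :
          Fin (4 ^ (α + 1))) = finFunctionFinEquiv i := by
        apply Fin.ext; simp
      rw [this, Equiv.symm_apply_apply]
    · have : (⟨blockStart α + (finFunctionFinEquiv j : ℕ) - blockStart α, by omega⟩ :
          Fin (4 ^ (α + 1))) = finFunctionFinEquiv j := by
        apply Fin.ext; simp
      rw [this, Equiv.symm_apply_apply]
  calc ∑ m ∈ Finset.Ico (blockStart α) (blockStart (α + 1)),
        ∑ n ∈ Finset.Ico (blockStart α) (blockStart (α + 1)),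
          (toepCoef μ m n : ℂ) * z m * w n
      = ∑ i : Fin (α + 1) → Fin 4, ∑ j : Fin (α + 1) → Fin 4,
          (toepCoef μ (blockStart α + (finFunctionFinEquiv i : ℕ))
            (blockStart α + (finFunctionFinEquiv j : ℕ)) : ℂ) *
            z (blockStart α + (finFunctionFinEquiv i : ℕ)) *
            w (blockStart α + (finFunctionFinEquiv j : ℕ)) := by
        rw [hb, Finset.sum_Ico_eq_sum_range]
        simp only [Nat.add_sub_cancel_left]
        rw [← Fin.sum_univ_eq_sum_range, ← Equiv.sum_comp finFunctionFinEquiv]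
        refine Finset.sum_congr rfl fun i _ => ?_
        rw [Finset.sum_Ico_eq_sum_range]
        simp only [Nat.add_sub_cancel_left]
        rw [← Fin.sum_univ_eq_sum_range, ← Equiv.sum_comp finFunctionFinEquiv]
    _ = _ := by
        rw [Finset.mul_sum]
        refine Finset.sum_congr rfl fun i _ => ?_
        rw [Finset.mul_sum]
        refine Finset.sum_congr rfl fun j _ => ?_
        rw [key]
        push_cast
        ring

/-- If `μ_α > 0` and `∑ μ_α < ∞`, then Toeplitz's quadratic form is
completely bounded on the closed unit polydisc `𝒮`: all its rectangular partial sums are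
bounded in modulus by `2 ∑_α μ_α`. -/
theorem statement15 (μ : ℕ → ℝ) (hpos : ∀ α, 0 < μ α) (hsum : Summable μ)
    (M N : ℕ) (x : ℕ → ℂ) (hx : ∀ n, ‖x n‖ ≤ 1) :
    ‖∑ m ∈ Finset.range M, ∑ n ∈ Finset.range N, (toepCoef μ m n : ℂ) * x m * x n‖ ≤
      2 * ∑' α, μ α := by
  set L := M + N with hL
  set B := blockStart L with hB
  have hM : M ≤ B := le_trans (by omega) (le_blockStart L)
  have hN : N ≤ B := le_trans (by omega) (le_blockStart L)
  set x1 : ℕ → ℂ := fun m => if m < M then x m else 0 with hx1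
  set x2 : ℕ → ℂ := fun n => if n < N then x n else 0 with hx2
  have hx1le : ∀ m, ‖x1 m‖ ≤ 1 := by
    intro m; rw [hx1]; dsimp only; split
    · exact hx m
    · simp
  have hx2le : ∀ n, ‖x2 n‖ ≤ 1 := by
    intro n; rw [hx2]; dsimp only; split
    · exact hx n
    · simp
  -- Step A
  have stepA : ∑ m ∈ Finset.range M, ∑ n ∈ Finset.range N, (toepCoef μ m n : ℂ) * x m * x n
      = ∑ m ∈ Finset.range B, ∑ n ∈ Finset.range B, (toepCoef μ m n : ℂ) * x1 m * x2 n := by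
    rw [← Finset.sum_subset (Finset.range_subset_range.2 hM)]
    · refine Finset.sum_congr rfl fun m hm => ?_
      rw [← Finset.sum_subset (Finset.range_subset_range.2 hN)]
      · refine Finset.sum_congr rfl fun n hn => ?_
        rw [hx1, hx2]; dsimp only
        rw [if_pos (Finset.mem_range.1 hm), if_pos (Finset.mem_range.1 hn)]
      · intro n _ hn
        rw [hx2]; dsimp only
        rw [if_neg (fun h => hn (Finset.mem_range.2 h)), mul_zero]
    · intro m _ hm
      refine Finset.sum_eq_zero fun n _ => ?_
      rw [hx1]; dsimp only
      rw [if_neg (fun h => hm (Finset.mem_range.2 h)), mul_zero, zero_mul]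
  -- Step B : decompose into blocks
  have stepB : ∑ m ∈ Finset.range B, ∑ n ∈ Finset.range B, (toepCoef μ m n : ℂ) * x1 m * x2 n
      = ∑ α ∈ Finset.range L, ∑ m ∈ Finset.Ico (blockStart α) (blockStart (α + 1)),
          ∑ n ∈ Finset.Ico (blockStart α) (blockStart (α + 1)),
            (toepCoef μ m n : ℂ) * x1 m * x2 n := by
    rw [hB, sum_range_blockStart]
    refine Finset.sum_congr rfl fun α hα => ?_
    refine Finset.sum_congr rfl fun m hm => ?_
    rw [sum_range_blockStart]
    rw [Finset.sum_eq_single_of_mem α hα]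
    intro β _ hβ
    refine Finset.sum_eq_zero fun n hn => ?_
    rw [Finset.mem_Ico] at hm hn
    rw [toepCoef_eq_zero μ (Ne.symm hβ) hm.1 hm.2 hn.1 hn.2]
    simp
  rw [stepA, stepB]
  -- bound each block
  have hblock : ∀ α : ℕ,
      ‖∑ m ∈ Finset.Ico (blockStart α) (blockStart (α + 1)),
          ∑ n ∈ Finset.Ico (blockStart α) (blockStart (α + 1)),
            (toepCoef μ m n : ℂ) * x1 m * x2 n‖ ≤ μ α := by
    intro α
    rw [block_sum]
    rw [norm_mul, Complex.norm_real, Real.norm_eq_abs]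
    have h8 : (0:ℝ) < 8 ^ (α + 1) := by positivity
    have hr : |μ α / 8 ^ (α + 1)| = μ α / 8 ^ (α + 1) :=
      abs_of_pos (div_pos (hpos α) h8)
    rw [hr]
    have hb := toep_bilinear (α + 1)
      (fun i => x1 (blockStart α + (finFunctionFinEquiv i : ℕ)))
      (fun j => x2 (blockStart α + (finFunctionFinEquiv j : ℕ)))
      (fun i => hx1le _) (fun j => hx2le _)
    calc μ α / 8 ^ (α + 1) *
          ‖∑ i, ∑ j, (toepT (α + 1) i j : ℂ) *
            x1 (blockStart α + (finFunctionFinEquiv i : ℕ)) *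
            x2 (blockStart α + (finFunctionFinEquiv j : ℕ))‖
        ≤ μ α / 8 ^ (α + 1) * 8 ^ (α + 1) :=
          mul_le_mul_of_nonneg_left hb (le_of_lt (div_pos (hpos α) h8))
      _ = μ α := div_mul_cancel₀ _ (ne_of_gt h8)
  have hsum0 : (0:ℝ) ≤ ∑' α, μ α := tsum_nonneg fun α => (hpos α).le
  calc ‖∑ α ∈ Finset.range L, ∑ m ∈ Finset.Ico (blockStart α) (blockStart (α + 1)),
          ∑ n ∈ Finset.Ico (blockStart α) (blockStart (α + 1)),
            (toepCoef μ m n : ℂ) * x1 m * x2 n‖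
      ≤ ∑ α ∈ Finset.range L, μ α :=
        (norm_sum_le _ _).trans (Finset.sum_le_sum fun α _ => hblock α)
    _ ≤ ∑' α, μ α := Summable.sum_le_tsum _ (fun α _ => (hpos α).le) hsum
    _ ≤ 2 * ∑' α, μ α := by linarith
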